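/- arXiv:2401.06027 — 3 statements merged into one kernel-verified Lean document; each statement's English description precedes it below -/
import Mathlib

section
/- For any graph G, the saturation of the ideal L_G with respect to x_∅ equals the toric ideal I_G, i.e., L_G : x_∅^∞ = I_G. -/
open MvPolynomial

section KempePrelim

variable {V : Type} 

/-- A proper `k`-coloring. -/
def IsColoring (G : SimpleGraph V) (k : ℕ) (f : V → Fin k) : Prop :=
  ∀ ⦃u v : V⦄, G.Adj u v → f u ≠ f v

/-- `g` is obtained from `f` by a Kempe switching: swap colors `i` and `j` on
one connected component of the subgraph induced on `f⁻¹(i) ∪ f⁻¹(j)`. -/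
def KempeSwitch (G : SimpleGraph V) {k : ℕ} (f g : V → Fin k) : Prop :=
  ∃ i j : Fin k, ∃ C : Set V,
    (∃ comp : (G.induce {v | f v = i ∨ f v = j}).ConnectedComponent,
      C = Subtype.val '' comp.supp) ∧
    (∀ v ∈ C, (f v = i → g v = j) ∧ (f v = j → g v = i)) ∧
    (∀ v ∉ C, g v = f v)

/-- A single step of Kempe equivalence between proper `k`-colorings. -/
def KempeStep (G : SimpleGraph V) {k : ℕ} (f g : V → Fin k) : Prop :=
  IsColoring G k f ∧ IsColoring G k g ∧ KempeSwitch G f g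

/-- Kempe equivalence of `k`-colorings. -/
def KempeEquiv (G : SimpleGraph V) {k : ℕ} (f g : V → Fin k) : Prop :=
  Relation.ReflTransGen (KempeStep G) f g

/-- The type of proper `k`-colorings of `G`. -/
def ProperColoring (G : SimpleGraph V) (k : ℕ) : Type _ :=
  {f : V → Fin k // IsColoring G k f}

/-- The number of Kempe classes of `k`-colorings of `G`. -/
noncomputable def Kc (G : SimpleGraph V) (k : ℕ) : ℕ :=
  Nat.card (Quot (fun f g : ProperColoring G k => KempeEquiv G f.1 g.1))

/-- The stable (independent) sets of `G`, as a type indexing variables. -/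
def StableSet (G : SimpleGraph V) : Type _ :=
  {s : Finset V // ∀ ⦃i⦄, i ∈ s → ∀ ⦃j⦄, j ∈ s → ¬ G.Adj i j}

def emptyStable (G : SimpleGraph V) : StableSet G :=
  ⟨∅, by intro i hi; simp at hi⟩

def singleStable (G : SimpleGraph V) (i : V) : StableSet G :=
  ⟨{i}, by
    intro a ha b hb
    simp only [Finset.mem_singleton] at ha hb
    rw [ha, hb]
    exact G.irrefl⟩

def eraseStable (G : SimpleGraph V) [DecidableEq V] (S : StableSet G) (i : V) : StableSet G :=
  ⟨S.1.erase i, fun _ ha _ hb => S.2 (Finset.mem_of_mem_erase ha) (Finset.mem_of_mem_erase hb)⟩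

variable (K : Type) [Field K]

/-- The monoid algebra map `x_S ↦ t^{ρ(S)} s`, into `K[t₁,…,t_d,s]`
(realized as `MvPolynomial (Option V) K`, with `none` playing the role of `s`). -/
noncomputable def piMap (G : SimpleGraph V) :
    MvPolynomial (StableSet G) K →ₐ[K] MvPolynomial (Option V) K :=
  aeval fun S : StableSet G => (∏ i ∈ S.1, X (some i)) * X (none : Option V)

/-- The toric ideal `I_G` of the stable set ring. -/
noncomputable def toricIdeal (G : SimpleGraph V) : Ideal (MvPolynomial (StableSet G) K) :=
  RingHom.ker (piMap K G).toRingHom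

/-- The ideal `L_G`. -/
noncomputable def idealL (G : SimpleGraph V) [DecidableEq V] :
    Ideal (MvPolynomial (StableSet G) K) :=
  Ideal.span {p | ∃ (S : StableSet G) (i : V), i ∈ S.1 ∧ 2 ≤ S.1.card ∧
    p = X (eraseStable G S i) * X (singleStable G i) - X S * X (emptyStable G)}

/-- The 2-coloring ideal `J_G`. -/
noncomputable def idealJ (G : SimpleGraph V) [DecidableEq V] :
    Ideal (MvPolynomial (StableSet G) K) :=
  Ideal.span {p | ∃ S₁ S₂ S₃ S₄ : StableSet G,
    Disjoint S₁.1 S₂.1 ∧ Disjoint S₃.1 S₄.1 ∧ S₁.1 ∪ S₂.1 = S₃.1 ∪ S₄.1 ∧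
    p = X S₁ * X S₂ - X S₃ * X S₄}

/-- The ideal `⟨[I_G]₂⟩` generated by all quadratic binomials of `I_G`. -/
noncomputable def quadPart (G : SimpleGraph V) : Ideal (MvPolynomial (StableSet G) K) :=
  Ideal.span {p | (∃ S₁ S₂ S₃ S₄ : StableSet G, p = X S₁ * X S₂ - X S₃ * X S₄) ∧
    p ∈ toricIdeal K G}

/-- The monomial ideal `M_G`. -/
noncomputable def idealM (G : SimpleGraph V) [DecidableEq V] :
    Ideal (MvPolynomial (StableSet G) K) :=
  Ideal.span {p | ∃ S T : StableSet G, (S.1 ∩ T.1).Nonempty ∧ p = X S * X T}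

/-- The Kempe ideal `K_G = J_G + M_G`. -/
noncomputable def kempeIdeal (G : SimpleGraph V) [DecidableEq V] :
    Ideal (MvPolynomial (StableSet G) K) :=
  idealJ K G + idealM K G

/-- The color class of a proper coloring, as a stable set. -/
def colorClass (G : SimpleGraph V) [Fintype V] [DecidableEq V] {k : ℕ}
    (f : V → Fin k) (hf : IsColoring G k f) (c : Fin k) : StableSet G :=
  ⟨Finset.univ.filter (fun v => f v = c), by
    intro a ha b hb hadj
    simp only [Finset.mem_filter] at ha hb
    exact hf hadj (ha.2.trans hb.2.symm)⟩

/-- The monomial `x_f` associated with a proper `k`-coloring `f`. -/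
noncomputable def xMonomial (G : SimpleGraph V) [Fintype V] [DecidableEq V] {k : ℕ}
    (f : V → Fin k) (hf : IsColoring G k f) : MvPolynomial (StableSet G) K :=
  ∏ c : Fin k, X (colorClass G f hf c)

/-- The Hilbert function `k ↦ dim_K (R/I)_k` of a quotient of `R[G]`. -/
noncomputable def hilbertFn (G : SimpleGraph V)
    (I : Ideal (MvPolynomial (StableSet G) K)) (k : ℕ) : ℕ :=
  Module.finrank K (Submodule.map (Ideal.Quotient.mkₐ K I).toLinearMap
    (homogeneousSubmodule (StableSet G) K k))

end KempePrelim

section SatAux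

variable {d : ℕ} (G : SimpleGraph (Fin d)) (K : Type) [Field K]

private lemma X_eq_mono {τ : Type*} (a : τ) :
    (X a : MvPolynomial τ K) = monomial (Finsupp.single a 1) 1 := by
  rw [← pow_one (X a : MvPolynomial τ K), X_pow_eq_monomial]

private lemma prod_X_single {α τ : Type*} (s : Finset α) (g : α → τ) :
    (∏ i ∈ s, (X (g i) : MvPolynomial τ K)) =
      monomial (∑ i ∈ s, Finsupp.single (g i) 1) (1 : K) := by
  classical
  induction s using Finset.induction_on with
  | empty => simp
  | insert _ _ h ih =>
    rw [Finset.prod_insert h, Finset.sum_insert h, ih, X_eq_mono, monomial_mul, one_mul]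

private lemma prod_monomial {α τ : Type*} (s : Finset α) (g : α → (τ →₀ ℕ)) :
    (∏ i ∈ s, (monomial (g i) 1 : MvPolynomial τ K)) = monomial (∑ i ∈ s, g i) (1 : K) := by
  classical
  induction s using Finset.induction_on with
  | empty => simp
  | insert _ _ h ih =>
    rw [Finset.prod_insert h, Finset.sum_insert h, ih, monomial_mul, one_mul]

/-- Exponent vector of the image of `X S` under `piMap`. -/
noncomputable def vSet (S : StableSet G) : Option (Fin d) →₀ ℕ :=
  Finsupp.single none 1 + ∑ i ∈ S.1, Finsupp.single (some i) 1

lemma piMap_X (S : StableSet G) :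
    piMap K G (X S) = monomial (vSet G S) (1 : K) := by
  rw [piMap, aeval_X, prod_X_single, X_eq_mono, monomial_mul, one_mul, vSet, add_comm]

lemma vSet_none (S : StableSet G) : vSet G S none = 1 := by
  simp [vSet, Finsupp.single_apply]

lemma vSet_some (S : StableSet G) (i : Fin d) :
    vSet G S (some i) = if i ∈ S.1 then 1 else 0 := by
  classical
  simp only [vSet, Finsupp.add_apply, Finsupp.single_apply, Finsupp.finset_sum_apply]
  simp [Finset.sum_ite_eq' S.1 i (fun _ => (1 : ℕ))]

lemma sum_vSet_some (S : StableSet G) : ∑ i : Fin d, vSet G S (some i) = S.1.card := by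
  classical
  simp only [vSet_some]
  rw [Finset.sum_ite_mem, Finset.univ_inter, Finset.sum_const, smul_eq_mul, mul_one]

/-- Exponent vector of the image of the monomial `X^m`. -/
noncomputable def uOf (m : StableSet G →₀ ℕ) : Option (Fin d) →₀ ℕ :=
  m.sum fun S k => k • vSet G S

lemma uOf_add (m₁ m₂ : StableSet G →₀ ℕ) : uOf G (m₁ + m₂) = uOf G m₁ + uOf G m₂ := by
  classical
  exact Finsupp.sum_add_index' (fun S => zero_smul _ _) (fun S a b => add_smul a b _)

lemma uOf_single (S : StableSet G) (k : ℕ) : uOf G (Finsupp.single S k) = k • vSet G S := by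
  classical
  rw [uOf]
  exact Finsupp.sum_single_index (zero_smul _ _)

lemma piMap_monomial (m : StableSet G →₀ ℕ) (c : K) :
    piMap K G (monomial m c) = monomial (uOf G m) c := by
  classical
  rw [piMap, aeval_monomial]
  have h1 : (m.prod fun S e => ((∏ i ∈ S.1, X (some i)) * X (none : Option (Fin d)) :
      MvPolynomial (Option (Fin d)) K) ^ e) = monomial (uOf G m) (1 : K) := by
    have h2 : ∀ S : StableSet G, ((∏ i ∈ S.1, X (some i)) * X (none : Option (Fin d)) :
        MvPolynomial (Option (Fin d)) K) = monomial (vSet G S) 1 := by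
      intro S
      rw [prod_X_single, X_eq_mono, monomial_mul, one_mul, vSet, add_comm]
    calc (m.prod fun S e => ((∏ i ∈ S.1, X (some i)) * X (none : Option (Fin d)) :
          MvPolynomial (Option (Fin d)) K) ^ e)
        = ∏ S ∈ m.support, (monomial (m S • vSet G S) (1 : K)) := by
          refine Finset.prod_congr rfl fun S _ => ?_
          dsimp only
          rw [h2 S, monomial_pow, one_pow]
      _ = monomial (∑ S ∈ m.support, m S • vSet G S) (1 : K) := prod_monomial K _ _
      _ = monomial (uOf G m) 1 := rfl
  rw [h1, algebraMap_eq, C_mul_monomial, mul_one]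

/-- The normal-form exponent vector. -/
noncomputable def tExp (n : ℕ) (u : Option (Fin d) →₀ ℕ) : StableSet G →₀ ℕ :=
  Finsupp.single (emptyStable G) (n + u none - ∑ i : Fin d, u (some i))
    + ∑ i : Fin d, Finsupp.single (singleStable G i) (u (some i))

lemma tExp_step (n : ℕ) (u : Option (Fin d) →₀ ℕ) (S : StableSet G)
    (h : (∑ i : Fin d, u (some i)) + S.1.card ≤ n) :
    tExp G n (u + vSet G S)
      = tExp G (n - S.1.card) u
        + (Finsupp.single (emptyStable G) 1 + ∑ i ∈ S.1, Finsupp.single (singleStable G i) 1) := by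
  classical
  unfold tExp
  have hnone : (u + vSet G S) none = u none + 1 := by
    rw [Finsupp.add_apply, vSet_none]
  have hsome : ∀ i : Fin d, (u + vSet G S) (some i)
      = u (some i) + (if i ∈ S.1 then 1 else 0) := by
    intro i; rw [Finsupp.add_apply, vSet_some]
  have hsum : (∑ i : Fin d, (u + vSet G S) (some i))
      = (∑ i : Fin d, u (some i)) + S.1.card := by
    simp only [hsome]
    rw [Finset.sum_add_distrib]
    congr 1
    rw [Finset.sum_ite_mem, Finset.univ_inter, Finset.sum_const, smul_eq_mul, mul_one]
  rw [hnone, hsum]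
  have h1 : n + (u none + 1) - ((∑ i : Fin d, u (some i)) + S.1.card)
      = ((n - S.1.card) + u none - ∑ i : Fin d, u (some i)) + 1 := by omega
  rw [h1, Finsupp.single_add]
  have h2 : (∑ i : Fin d, Finsupp.single (singleStable G i) ((u + vSet G S) (some i)))
      = (∑ i : Fin d, Finsupp.single (singleStable G i) (u (some i)))
        + ∑ i ∈ S.1, Finsupp.single (singleStable G i) 1 := by
    simp only [hsome, Finsupp.single_add]
    rw [Finset.sum_add_distrib]
    congr 1
    have h3 : ∀ i : Fin d, Finsupp.single (singleStable G i) (if i ∈ S.1 then 1 else 0)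
        = if i ∈ S.1 then Finsupp.single (singleStable G i) 1 else 0 := by
      intro i; split_ifs <;> simp
    simp only [h3]
    rw [Finset.sum_ite_mem, Finset.univ_inter]
  rw [h2]
  abel

lemma sum_some_uOf (m : StableSet G →₀ ℕ) :
    (∑ i : Fin d, uOf G m (some i)) = m.sum fun S k => k * S.1.card := by
  classical
  have h1 : ∀ i : Fin d, uOf G m (some i) = ∑ S ∈ m.support, m S * vSet G S (some i) := by
    intro i
    rw [uOf, Finsupp.sum, Finsupp.finset_sum_apply]
    refine Finset.sum_congr rfl fun S _ => ?_
    rw [Finsupp.smul_apply, smul_eq_mul]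
  simp only [h1]
  rw [Finset.sum_comm, Finsupp.sum]
  refine Finset.sum_congr rfl fun S _ => ?_
  rw [← Finset.mul_sum, sum_vSet_some]

lemma straight : ∀ (k : ℕ) (S : StableSet G), S.1.card = k →
    (X (emptyStable G) : MvPolynomial (StableSet G) K) ^ S.1.card * X S
      - X (emptyStable G) * ∏ i ∈ S.1, X (singleStable G i) ∈ idealL K G := by
  intro k
  induction k using Nat.strong_induction_on with
  | _ k ih =>
    intro S hk
    rcases Nat.lt_or_ge k 2 with h2 | h2
    · interval_cases k
      · have hS : S = emptyStable G := Subtype.ext (Finset.card_eq_zero.mp hk)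
        rw [hS]
        have : (emptyStable G).1 = (∅ : Finset (Fin d)) := rfl
        rw [this]
        simp only [Finset.card_empty, pow_zero, one_mul, Finset.prod_empty, mul_one, sub_self]
        exact (idealL K G).zero_mem
      · obtain ⟨i, hi⟩ := Finset.card_eq_one.mp hk
        have hS : S = singleStable G i := Subtype.ext hi
        rw [hS]
        have : (singleStable G i).1 = ({i} : Finset (Fin d)) := rfl
        rw [this]
        simp only [Finset.card_singleton, pow_one, Finset.prod_singleton, sub_self]
        exact (idealL K G).zero_mem
    · obtain ⟨k', rfl⟩ : ∃ k', k = k' + 1 := ⟨k - 1, by omega⟩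
      have hpos : 0 < S.1.card := by omega
      obtain ⟨i, hi⟩ := Finset.card_pos.mp hpos
      have hT : (eraseStable G S i).1.card = k' := by
        have : (eraseStable G S i).1 = S.1.erase i := rfl
        rw [this, Finset.card_erase_of_mem hi, hk]
        omega
      have hgen : X (eraseStable G S i) * X (singleStable G i)
          - X S * X (emptyStable G) ∈ idealL K G :=
        Ideal.subset_span ⟨S, i, hi, by omega, rfl⟩
      have hih := ih k' (by omega) (eraseStable G S i) hT
      rw [hT] at hih
      have hprod : (∏ j ∈ S.1, X (singleStable G j) : MvPolynomial (StableSet G) K)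
          = X (singleStable G i) * ∏ j ∈ S.1.erase i, X (singleStable G j) :=
        (Finset.mul_prod_erase _ _ hi).symm
      have hTe : (eraseStable G S i).1 = S.1.erase i := rfl
      have key : (X (emptyStable G) : MvPolynomial (StableSet G) K) ^ S.1.card * X S
            - X (emptyStable G) * ∏ j ∈ S.1, X (singleStable G j)
          = (-(X (emptyStable G) ^ k'))
              * (X (eraseStable G S i) * X (singleStable G i) - X S * X (emptyStable G))
            + (X (singleStable G i))
              * (X (emptyStable G) ^ k' * X (eraseStable G S i)
                - X (emptyStable G) * ∏ j ∈ (eraseStable G S i).1, X (singleStable G j)) := by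
        rw [hk, hprod, hTe]
        ring
      rw [key]
      exact Ideal.add_mem _ (Ideal.mul_mem_left _ _ hgen) (Ideal.mul_mem_left _ _ hih)

lemma key_monomial : ∀ (k : ℕ) (m : StableSet G →₀ ℕ), (m.sum fun _ e => e) = k →
    ∀ n : ℕ, (m.sum fun S e => e * S.1.card) ≤ n →
    (X (emptyStable G) : MvPolynomial (StableSet G) K) ^ n * monomial m 1
      - monomial (tExp G n (uOf G m)) 1 ∈ idealL K G := by
  classical
  intro k
  induction k using Nat.strong_induction_on with
  | _ k ih =>
    intro m hm n hn
    rcases eq_or_ne m 0 with rfl | hm0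
    · have h1 : uOf G 0 = 0 := by simp [uOf]
      have h2 : tExp G n (0 : Option (Fin d) →₀ ℕ) = Finsupp.single (emptyStable G) n := by
        simp [tExp]
      rw [h1, h2]
      have h3 : (X (emptyStable G) : MvPolynomial (StableSet G) K) ^ n
          * monomial (0 : StableSet G →₀ ℕ) 1
          = monomial (Finsupp.single (emptyStable G) n) 1 := by
        rw [X_pow_eq_monomial, monomial_mul, add_zero, mul_one]
      rw [h3, sub_self]
      exact (idealL K G).zero_mem
    · obtain ⟨S, hS⟩ := Finsupp.support_nonempty_iff.mpr hm0
      have hSm : 1 ≤ m S := Nat.one_le_iff_ne_zero.mpr (Finsupp.mem_support_iff.mp hS)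
      set m' := m - Finsupp.single S 1 with hm'def
      have hmm : m = m' + Finsupp.single S 1 := by
        ext T
        by_cases hTS : T = S
        · subst hTS
          simp only [hm'def, Finsupp.add_apply, Finsupp.tsub_apply, Finsupp.single_eq_same]
          omega
        · simp [hm'def, Finsupp.single_apply, Ne.symm hTS]
      have hdeg : (m'.sum fun _ e => e) + 1 = k := by
        have e1 : ((m' + Finsupp.single S 1).sum fun (_ : StableSet G) (e : ℕ) => e)
            = (m'.sum fun _ e => e) + ((Finsupp.single S 1).sum fun _ e => e) :=
          Finsupp.sum_add_index' (fun _ => rfl) (fun _ _ _ => rfl)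
        have e2 : ((Finsupp.single S 1).sum fun (_ : StableSet G) (e : ℕ) => e) = 1 :=
          Finsupp.sum_single_index rfl
        rw [← hm, hmm, e1, e2]
      have hcard : (m'.sum fun S e => e * S.1.card) + S.1.card ≤ n := by
        have e1 : ((m' + Finsupp.single S 1).sum fun T e => e * T.1.card)
            = (m'.sum fun T e => e * T.1.card)
              + ((Finsupp.single S 1).sum fun T e => e * T.1.card) :=
          Finsupp.sum_add_index' (fun T => zero_mul _) (fun T a b => add_mul a b _)
        have e2 : ((Finsupp.single S 1).sum fun T e => e * T.1.card) = 1 * S.1.card :=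
          Finsupp.sum_single_index (zero_mul _)
        have e3 : (m.sum fun T e => e * T.1.card)
            = (m'.sum fun T e => e * T.1.card) + S.1.card := by
          rw [hmm, e1, e2, one_mul]
        omega
      have hle : S.1.card ≤ n := by omega
      have ihm := ih ((m'.sum fun _ e => e)) (by omega) m' rfl (n - S.1.card) (by omega)
      have hstr := straight G K S.1.card S rfl
      have husum : (∑ i : Fin d, uOf G m' (some i)) + S.1.card ≤ n := by
        rw [sum_some_uOf]; exact hcard
      have huOf : uOf G m = uOf G m' + vSet G S := by
        rw [hmm, uOf_add, uOf_single, one_smul]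
      have htE : tExp G n (uOf G m)
          = tExp G (n - S.1.card) (uOf G m')
            + (Finsupp.single (emptyStable G) 1
              + ∑ i ∈ S.1, Finsupp.single (singleStable G i) 1) := by
        rw [huOf]
        exact tExp_step G n (uOf G m') S husum
      have hCA : (X (emptyStable G) : MvPolynomial (StableSet G) K) ^ n * monomial m 1
          = (X (emptyStable G) ^ S.1.card * X S)
            * (X (emptyStable G) ^ (n - S.1.card) * monomial m' 1) := by
        have hpow : (X (emptyStable G) : MvPolynomial (StableSet G) K) ^ S.1.card
            * X (emptyStable G) ^ (n - S.1.card) = X (emptyStable G) ^ n := by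
          rw [← pow_add]
          congr 1
          omega
        have hmon : (monomial m (1 : K)) = monomial m' 1 * X S := by
          rw [hmm, monomial_add_single, pow_one]
        rw [hmon, ← hpow]
        ring
      have hBD : (monomial (tExp G n (uOf G m)) (1 : K))
          = monomial (tExp G (n - S.1.card) (uOf G m')) 1
            * (X (emptyStable G) * ∏ i ∈ S.1, X (singleStable G i)) := by
        rw [htE, prod_X_single, X_eq_mono, monomial_mul, one_mul,
          monomial_mul, one_mul]
      rw [hCA, hBD]
      have expand : ((X (emptyStable G) : MvPolynomial (StableSet G) K) ^ S.1.card * X S)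
            * (X (emptyStable G) ^ (n - S.1.card) * monomial m' (1 : K))
          - monomial (tExp G (n - S.1.card) (uOf G m')) 1
            * (X (emptyStable G) * ∏ i ∈ S.1, X (singleStable G i))
          = (X (emptyStable G) ^ S.1.card * X S)
              * (X (emptyStable G) ^ (n - S.1.card) * monomial m' 1
                - monomial (tExp G (n - S.1.card) (uOf G m')) 1)
            + monomial (tExp G (n - S.1.card) (uOf G m')) 1
              * (X (emptyStable G) ^ S.1.card * X S
                - X (emptyStable G) * ∏ i ∈ S.1, X (singleStable G i)) := by
        ring
      rw [expand]
      exact Ideal.add_mem _ (Ideal.mul_mem_left _ _ ihm) (Ideal.mul_mem_left _ _ hstr)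

/-- Normal-form substitution, as an additive map. -/
noncomputable def psi (n : ℕ) : MvPolynomial (Option (Fin d)) K →+ MvPolynomial (StableSet G) K :=
  { toFun := AddMonoidAlgebra.mapDomain (tExp G n)
    map_zero' := AddMonoidAlgebra.mapDomain_zero _
    map_add' := AddMonoidAlgebra.mapDomain_add _ }

lemma psi_monomial (n : ℕ) (u : Option (Fin d) →₀ ℕ) (c : K) :
    psi G K n (monomial u c) = monomial (tExp G n u) c := by
  rw [← single_eq_monomial, ← single_eq_monomial]
  exact AddMonoidAlgebra.mapDomain_single

lemma main_mem (p : MvPolynomial (StableSet G) K) (hp : piMap K G p = 0) :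
    (X (emptyStable G) : MvPolynomial (StableSet G) K) ^ (d * p.totalDegree + 1) * p
      ∈ idealL K G := by
  classical
  set n := d * p.totalDegree + 1 with hn
  have hsum : (X (emptyStable G) : MvPolynomial (StableSet G) K) ^ n * p
      - psi G K n (piMap K G p) ∈ idealL K G := by
    rw [p.as_sum]
    rw [Finset.mul_sum, map_sum, map_sum, ← Finset.sum_sub_distrib]
    refine Ideal.sum_mem _ fun m hm => ?_
    rw [piMap_monomial, psi_monomial]
    have hbound : (m.sum fun S e => e * S.1.card) ≤ n := by
      have h1 : (m.sum fun S e => e * S.1.card) ≤ m.sum fun _ e => e * d := by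
        refine Finset.sum_le_sum fun S _ => ?_
        exact Nat.mul_le_mul_left _ (le_trans (Finset.card_le_univ S.1)
          (Fintype.card_fin d).le)
      have h2 : (m.sum fun _ e => e * d) = (m.sum fun _ e => e) * d := by
        rw [Finsupp.sum, Finsupp.sum, ← Finset.sum_mul]
      have h3 : (m.sum fun _ e => e) ≤ p.totalDegree := le_totalDegree hm
      calc (m.sum fun S e => e * S.1.card) ≤ (m.sum fun _ e => e) * d := by rw [← h2]; exact h1
        _ ≤ p.totalDegree * d := Nat.mul_le_mul_right _ h3
        _ ≤ n := by rw [hn, Nat.mul_comm]; omega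
    have hkey := key_monomial G K (m.sum fun _ e => e) m rfl n hbound
    have heq : (X (emptyStable G) : MvPolynomial (StableSet G) K) ^ n
          * monomial m (coeff m p) - monomial (tExp G n (uOf G m)) (coeff m p)
        = C (coeff m p) * ((X (emptyStable G) : MvPolynomial (StableSet G) K) ^ n
            * monomial m 1 - monomial (tExp G n (uOf G m)) 1) := by
      rw [mul_sub, mul_left_comm, C_mul_monomial, C_mul_monomial, mul_one]
    rw [heq]
    exact Ideal.mul_mem_left _ _ hkey
  rw [hp, map_zero, sub_zero] at hsum
  exact hsum

lemma L_le_toric : idealL K G ≤ toricIdeal K G := by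
  classical
  rw [idealL, Ideal.span_le]
  rintro q ⟨S, i, hi, hcard, rfl⟩
  have : piMap K G (X (eraseStable G S i) * X (singleStable G i)
      - X S * X (emptyStable G)) = 0 := by
    rw [map_sub, map_mul, map_mul, piMap_X, piMap_X, piMap_X, piMap_X,
      monomial_mul, monomial_mul, one_mul]
    have hv : vSet G (eraseStable G S i) + vSet G (singleStable G i)
        = vSet G S + vSet G (emptyStable G) := by
      unfold vSet
      have h1 : (eraseStable G S i).1 = S.1.erase i := rfl
      have h2 : (singleStable G i).1 = ({i} : Finset (Fin d)) := rfl
      have h3 : (emptyStable G).1 = (∅ : Finset (Fin d)) := rfl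
      rw [h1, h2, h3, Finset.sum_singleton, Finset.sum_empty,
        ← Finset.add_sum_erase _ _ hi]
      abel
    rw [hv, sub_self]
  simpa [toricIdeal, RingHom.mem_ker] using this

end SatAux

theorem saturation_idealL_eq_toricIdeal {d : ℕ} (G : SimpleGraph (Fin d))
    (K : Type) [Field K] :
    ∀ p : MvPolynomial (StableSet G) K,
      (∃ n : ℕ, 0 < n ∧ X (emptyStable G) ^ n * p ∈ idealL K G) ↔ p ∈ toricIdeal K G := by
  classical
  intro p
  constructor
  · rintro ⟨n, hn, hmem⟩
    have h1 : X (emptyStable G) ^ n * p ∈ toricIdeal K G := L_le_toric G K hmem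
    have hprime : (toricIdeal K G).IsPrime := RingHom.ker_isPrime _
    have hX : X (emptyStable G) ∉ toricIdeal K G := by
      have h2 : piMap K G (X (emptyStable G)) = monomial (vSet G (emptyStable G)) 1 :=
        piMap_X G K _
      intro hc
      rw [toricIdeal, RingHom.mem_ker] at hc
      rw [show ((piMap K G).toRingHom (X (emptyStable G)))
        = piMap K G (X (emptyStable G)) from rfl, h2] at hc
      exact one_ne_zero (monomial_eq_zero.mp hc)
    rcases hprime.mem_or_mem h1 with h | h
    · exact absurd (hprime.mem_of_pow_mem n h) hX
    · exact h
  · intro hp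
    refine ⟨d * p.totalDegree + 1, Nat.succ_pos _, ?_⟩
    refine main_mem G K p ?_
    rw [toricIdeal, RingHom.mem_ker] at hp
    exact hp
end

section
/- The quadratic part ⟨[I_G]₂⟩ equals the 2-coloring ideal J_G if and only if the complement graph of G contains no triangle (3-cycle). -/
open MvPolynomial

section AuxProof

open Finsupp

set_option linter.unusedSectionVars false

open MvPolynomial Finsupp

lemma prod_X_eq_monomial' {σ τ R : Type*} [CommSemiring R] (f : σ → τ) (s : Finset σ) :
    (∏ i ∈ s, (X (f i) : MvPolynomial τ R)) = monomial (∑ i ∈ s, Finsupp.single (f i) 1) 1 := by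
  classical
  induction s using Finset.induction with
  | empty => simp [monomial_zero']
  | insert _ _ h ih =>
      rw [Finset.prod_insert h, Finset.sum_insert h, ih]
      rw [show (X (f _) : MvPolynomial τ R) = monomial (Finsupp.single (f _) 1) 1 from rfl,
        monomial_mul, one_mul]

lemma sum_single_apply {V : Type*} [DecidableEq V] (S : Finset V) (v : V) :
    (∑ i ∈ S, Finsupp.single (some i) (1:ℕ)) (some v) = if v ∈ S then 1 else 0 := by
  classical
  rw [Finsupp.finset_sum_apply]
  simp [Finsupp.single_apply, Finset.sum_ite_eq' S v (fun _ => 1)]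

lemma sum_single_apply_none {V : Type*} (S : Finset V) :
    (∑ i ∈ S, Finsupp.single (some i) (1:ℕ)) (none) = 0 := by
  classical
  rw [Finsupp.finset_sum_apply]
  simp [Finsupp.single_apply]

open Finsupp in
section
variable {V : Type} [DecidableEq V] (K : Type) [Field K] (G : SimpleGraph V)

/-- membership count -/
def cnt (S : Finset V) (v : V) : ℕ := if v ∈ S then 1 else 0

lemma piMap_XX (S T : StableSet G) :
    piMap K G (X S * X T) =
      monomial ((∑ i ∈ S.1, Finsupp.single (some i) 1) + Finsupp.single none 1
        + ((∑ i ∈ T.1, Finsupp.single (some i) 1) + Finsupp.single none 1)) 1 := by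
  rw [map_mul]
  show ((aeval _) (X S)) * ((aeval _) (X T)) = _
  rw [aeval_X, aeval_X, prod_X_eq_monomial' (R := K) (some : V → Option V) S.1,
    prod_X_eq_monomial' (R := K) (some : V → Option V) T.1]
  rw [show (X (none : Option V) : MvPolynomial (Option V) K)
      = monomial (Finsupp.single (none : Option V) 1) 1 from rfl]
  rw [monomial_mul, monomial_mul, monomial_mul]
  ring_nf

lemma binomial_mem_toricIdeal_iff (S₁ S₂ S₃ S₄ : StableSet G) :
    X S₁ * X S₂ - X S₃ * X S₄ ∈ toricIdeal K G ↔
      ∀ v : V, cnt S₁.1 v + cnt S₂.1 v = cnt S₃.1 v + cnt S₄.1 v := by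
  classical
  rw [toricIdeal, RingHom.mem_ker, map_sub, sub_eq_zero]
  show piMap K G _ = piMap K G _ ↔ _
  rw [piMap_XX, piMap_XX, monomial_eq_monomial_iff]
  constructor
  · rintro (⟨h, -⟩ | ⟨h, -⟩)
    · intro v
      have := DFunLike.congr_fun h (some v)
      simpa [Finsupp.add_apply, sum_single_apply, Finsupp.single_apply, cnt] using this
    · exact absurd h one_ne_zero
  · intro h
    left
    refine ⟨Finsupp.ext fun o => ?_, rfl⟩
    cases o with
    | none => simp [Finsupp.add_apply, sum_single_apply_none, Finsupp.single_apply]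
    | some v =>
        have := h v
        simpa [Finsupp.add_apply, sum_single_apply, Finsupp.single_apply, cnt] using this

end

open Finsupp in
section
variable {V : Type} [DecidableEq V] (K : Type) [Field K] (G : SimpleGraph V)

set_option linter.unusedSectionVars false

lemma XX_eq_monomial (S T : StableSet G) :
    (X S * X T : MvPolynomial (StableSet G) K)
      = monomial (Finsupp.single S 1 + Finsupp.single T 1) 1 := by
  rw [show (X S : MvPolynomial (StableSet G) K) = monomial (Finsupp.single S 1) 1 from rfl,
    show (X T : MvPolynomial (StableSet G) K) = monomial (Finsupp.single T 1) 1 from rfl,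
    monomial_mul, one_mul]

lemma coeff_idealJ_zero (v₁ v₂ : StableSet G) (hne : v₁ ≠ v₂)
    (hint : ¬ Disjoint v₁.1 v₂.1) {p : MvPolynomial (StableSet G) K}
    (hp : p ∈ idealJ K G) :
    coeff (Finsupp.single v₁ 1 + Finsupp.single v₂ 1) p = 0 := by
  classical
  set μ : (StableSet G) →₀ ℕ := Finsupp.single v₁ 1 + Finsupp.single v₂ 1 with hμ
  have key : ∀ (T₁ T₂ : StableSet G), Disjoint T₁.1 T₂.1 →
      ∀ r : MvPolynomial (StableSet G) K, coeff μ (r * (X T₁ * X T₂)) = 0 := by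
    intro T₁ T₂ hdisj r
    rw [XX_eq_monomial, coeff_mul_monomial']
    rw [if_neg]
    intro hle
    have h1 := Finsupp.le_def.mp hle T₁
    have h2 := Finsupp.le_def.mp hle T₂
    simp only [hμ, Finsupp.add_apply, Finsupp.single_apply] at h1 h2
    by_cases h12 : T₁ = T₂
    · subst h12
      have h1' : (2:ℕ) ≤ (if v₁ = T₁ then 1 else 0) + (if v₂ = T₁ then 1 else 0) := by
        simpa using h1
      split_ifs at h1' with e1 e2
      · exact hne (e1.trans e2.symm)
      all_goals omega
    · have hT₁ : T₁ = v₁ ∨ T₁ = v₂ := by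
        rcases eq_or_ne T₁ v₁ with h | h; · exact Or.inl h
        rcases eq_or_ne T₁ v₂ with h' | h'; · exact Or.inr h'
        exfalso
        rw [if_neg (Ne.symm h), if_neg (Ne.symm h')] at h1
        split_ifs at h1 <;> first | omega | simp_all
      have hT₂ : T₂ = v₁ ∨ T₂ = v₂ := by
        rcases eq_or_ne T₂ v₁ with h | h; · exact Or.inl h
        rcases eq_or_ne T₂ v₂ with h' | h'; · exact Or.inr h'
        exfalso
        rw [if_neg (Ne.symm h), if_neg (Ne.symm h')] at h2
        split_ifs at h2 <;> first | omega | simp_all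
      rcases hT₁ with rfl | rfl <;> rcases hT₂ with rfl | rfl
      · exact h12 rfl
      · exact hint hdisj
      · exact hint hdisj.symm
      · exact h12 rfl
  rw [idealJ] at hp
  rcases Submodule.mem_span_set.mp hp with ⟨c, hc, rfl⟩
  rw [Finsupp.sum, coeff_sum]
  refine Finset.sum_eq_zero fun q hq => ?_
  obtain ⟨S₁, S₂, S₃, S₄, h12, h34, -, rfl⟩ := hc hq
  rw [smul_eq_mul, mul_sub, coeff_sub, key S₁ S₂ h12, key S₃ S₄ h34, sub_zero]

end

section
variable {V : Type} [DecidableEq V]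

set_option linter.unusedSectionVars false

lemma stable_card_le_two {G : SimpleGraph V} (h : Gᶜ.CliqueFree 3) (S : StableSet G) :
    S.1.card ≤ 2 := by
  by_contra hcard
  push_neg at hcard
  obtain ⟨t, hts, ht3⟩ := Finset.exists_subset_card_eq (show 3 ≤ S.1.card by omega)
  refine h t ⟨?_, ht3⟩
  intro i hi j hj hij
  rw [SimpleGraph.compl_adj]
  exact ⟨hij, S.2 (hts hi) (hts hj)⟩

/-- cancellation for indicator counts -/
lemma cnt_ext {A B : Finset V}
    (h : ∀ w, (if w ∈ A then (1:ℕ) else 0) = if w ∈ B then 1 else 0) : A = B := by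
  ext w
  have := h w
  by_cases hA : w ∈ A <;> by_cases hB : w ∈ B <;> simp_all

lemma pair_decomp {A B C D : Finset V}
    (hA : A.card ≤ 1) (hB : B.card ≤ 1) (hC : C.card ≤ 1) (hD : D.card ≤ 1)
    (h : ∀ w, (if w ∈ A then (1:ℕ) else 0) + (if w ∈ B then 1 else 0)
        = (if w ∈ C then 1 else 0) + (if w ∈ D then 1 else 0)) :
    (A = C ∧ B = D) ∨ (A = D ∧ B = C) := by
  classical
  have key : ∀ {X : Finset V} {x : V}, X.card ≤ 1 → x ∈ X → X = {x} := by
    intro X x hX hx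
    apply Finset.eq_singleton_iff_unique_mem.mpr
    exact ⟨hx, fun y hy => Finset.card_le_one.mp hX y hy x hx⟩
  rcases A.eq_empty_or_nonempty with rfl | ⟨a, ha⟩
  · rcases B.eq_empty_or_nonempty with rfl | ⟨b, hb⟩
    · left
      constructor
      · refine (Finset.eq_empty_iff_forall_notMem.mpr fun w hw => ?_).symm
        have := h w
        by_cases h' : w ∈ D <;> by_cases h'' : w ∈ C <;> simp_all
      · refine (Finset.eq_empty_iff_forall_notMem.mpr fun w hw => ?_).symm
        have := h w
        by_cases h' : w ∈ D <;> by_cases h'' : w ∈ C <;> simp_all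
    · have hbCD : b ∈ C ∨ b ∈ D := by
        have := h b
        by_cases hC' : b ∈ C <;> by_cases hD' : b ∈ D <;> simp_all
      have hB' : B = {b} := key hB hb
      rcases hbCD with hbC | hbD
      · have hC' : C = {b} := key hC hbC
        right
        have hD' : D = ∅ := by
          refine Finset.eq_empty_iff_forall_notMem.mpr fun w hw => ?_
          have := h w
          rw [hB', hC'] at this
          by_cases hwb : w = b <;> simp_all
        exact ⟨hD'.symm, hB'.trans hC'.symm⟩
      · have hD' : D = {b} := key hD hbD
        left
        have hC' : C = ∅ := by
          refine Finset.eq_empty_iff_forall_notMem.mpr fun w hw => ?_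
          have := h w
          rw [hB', hD'] at this
          by_cases hwb : w = b <;> simp_all
        exact ⟨hC'.symm, hB'.trans hD'.symm⟩
  · have hA' : A = {a} := key hA ha
    have haCD : a ∈ C ∨ a ∈ D := by
      have := h a
      by_cases hC' : a ∈ C <;> by_cases hD' : a ∈ D <;> simp_all
    rcases haCD with haC | haD
    · have hC' : C = {a} := key hC haC
      left
      refine ⟨hA'.trans hC'.symm, cnt_ext fun w => ?_⟩
      have := h w
      rw [hA', hC'] at this
      omega
    · have hD' : D = {a} := key hD haD
      right
      refine ⟨hA'.trans hD'.symm, cnt_ext fun w => ?_⟩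
      have := h w
      rw [hA', hD'] at this
      omega

end

section
variable {V : Type} [DecidableEq V] (K : Type) [Field K] (G : SimpleGraph V)

set_option linter.unusedSectionVars false

lemma idealJ_le_quadPart : idealJ K G ≤ quadPart K G := by
  rw [idealJ]
  apply Ideal.span_le.mpr
  rintro p ⟨S₁, S₂, S₃, S₄, h12, h34, hu, rfl⟩
  apply Ideal.subset_span
  refine ⟨⟨S₁, S₂, S₃, S₄, rfl⟩, ?_⟩
  rw [binomial_mem_toricIdeal_iff]
  intro v
  have h12' : v ∈ S₁.1 → v ∉ S₂.1 := fun hv => Finset.disjoint_left.mp h12 hv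
  have h34' : v ∈ S₃.1 → v ∉ S₄.1 := fun hv => Finset.disjoint_left.mp h34 hv
  have huv : v ∈ S₁.1 ∪ S₂.1 ↔ v ∈ S₃.1 ∪ S₄.1 := by rw [hu]
  simp only [Finset.mem_union] at huv
  simp only [cnt]
  by_cases h1 : v ∈ S₁.1 <;> by_cases h2 : v ∈ S₂.1 <;> by_cases h3 : v ∈ S₃.1 <;>
    by_cases h4 : v ∈ S₄.1 <;> simp_all

lemma quadPart_le_idealJ (h : Gᶜ.CliqueFree 3) : quadPart K G ≤ idealJ K G := by
  rw [quadPart]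
  apply Ideal.span_le.mpr
  rintro p ⟨⟨S₁, S₂, S₃, S₄, rfl⟩, hker⟩
  have hcnt := (binomial_mem_toricIdeal_iff K G S₁ S₂ S₃ S₄).mp hker
  by_cases hd : Disjoint S₁.1 S₂.1
  · have hd' : Disjoint S₃.1 S₄.1 := by
      rw [Finset.disjoint_left] at hd ⊢
      intro v h3 h4
      have := hcnt v
      have hdv := @hd v
      simp only [cnt] at this
      by_cases h1 : v ∈ S₁.1 <;> by_cases h2 : v ∈ S₂.1 <;> simp_all
    have hu : S₁.1 ∪ S₂.1 = S₃.1 ∪ S₄.1 := by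
      ext w
      have := hcnt w
      simp only [cnt] at this
      simp only [Finset.mem_union]
      by_cases h1 : w ∈ S₁.1 <;> by_cases h2 : w ∈ S₂.1 <;> by_cases h3 : w ∈ S₃.1 <;>
        by_cases h4 : w ∈ S₄.1 <;> simp_all
    exact Ideal.subset_span ⟨S₁, S₂, S₃, S₄, hd, hd', hu, rfl⟩
  · rw [Finset.not_disjoint_iff] at hd
    obtain ⟨v, hv1, hv2⟩ := hd
    have hv3 : v ∈ S₃.1 ∧ v ∈ S₄.1 := by
      have := hcnt v
      simp only [cnt, if_pos hv1, if_pos hv2] at this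
      by_cases h3 : v ∈ S₃.1 <;> by_cases h4 : v ∈ S₄.1 <;> simp_all
    have hc : ∀ (S : StableSet G), v ∈ S.1 → (S.1.erase v).card ≤ 1 := by
      intro S hvS
      have h2 := stable_card_le_two h S
      have h3 := Finset.card_erase_of_mem hvS
      omega
    have hkey := pair_decomp (hc S₁ hv1) (hc S₂ hv2) (hc S₃ hv3.1) (hc S₄ hv3.2) ?_
    swap
    · intro w
      by_cases hwv : w = v
      · subst hwv; simp [Finset.mem_erase]
      · have := hcnt w
        simp only [cnt] at this
        simp only [Finset.mem_erase, hwv, ne_eq, not_false_iff, true_and]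
        exact this
    have hins : ∀ (S T : StableSet G), v ∈ S.1 → v ∈ T.1 → S.1.erase v = T.1.erase v → S = T := by
      intro S T hS hT hET
      apply Subtype.ext
      rw [← Finset.insert_erase hS, ← Finset.insert_erase hT, hET]
    have hzero : X S₁ * X S₂ - X S₃ * X S₄ = (0 : MvPolynomial (StableSet G) K) := by
      rcases hkey with ⟨e1, e2⟩ | ⟨e1, e2⟩
      · rw [hins S₁ S₃ hv1 hv3.1 e1, hins S₂ S₄ hv2 hv3.2 e2, sub_self]
      · rw [hins S₁ S₄ hv1 hv3.2 e1, hins S₂ S₃ hv2 hv3.1 e2, mul_comm, sub_self]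
    rw [hzero]
    exact (idealJ K G).zero_mem

end


end AuxProof

theorem quadPart_eq_idealJ_iff {d : ℕ} (G : SimpleGraph (Fin d))
    (K : Type) [Field K] :
    quadPart K G = idealJ K G ↔ Gᶜ.CliqueFree 3 := by
  classical
  constructor
  · intro heq
    by_contra hncf
    rw [SimpleGraph.CliqueFree] at hncf
    push_neg at hncf
    obtain ⟨t, ht⟩ := hncf
    obtain ⟨a, b, c, hab, hac, hbc, rfl⟩ := Finset.card_eq_three.mp ht.card_eq
    have hcl := ht.isClique
    have nadj : ∀ i ∈ ({a, b, c} : Finset (Fin d)), ∀ j ∈ ({a, b, c} : Finset (Fin d)),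
        ¬ G.Adj i j := by
      intro i hi j hj hadj
      by_cases hij : i = j
      · subst hij; exact G.irrefl hadj
      · have := hcl (Finset.mem_coe.mpr hi) (Finset.mem_coe.mpr hj) hij
        rw [SimpleGraph.compl_adj] at this
        exact this.2 hadj
    have hsub : ∀ s : Finset (Fin d), s ⊆ {a, b, c} →
        ∀ ⦃i⦄, i ∈ s → ∀ ⦃j⦄, j ∈ s → ¬ G.Adj i j :=
      fun s hs i hi j hj => nadj i (hs hi) j (hs hj)
    set Sab : StableSet G := ⟨{a, b}, hsub _ (by
      intro x hx
      simp only [Finset.mem_insert, Finset.mem_singleton] at hx ⊢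
      tauto)⟩ with hSab
    set Sbc : StableSet G := ⟨{b, c}, hsub _ (by
      intro x hx
      simp only [Finset.mem_insert, Finset.mem_singleton] at hx ⊢
      tauto)⟩ with hSbc
    set Sb : StableSet G := ⟨{b}, hsub _ (by
      intro x hx
      simp only [Finset.mem_insert, Finset.mem_singleton] at hx ⊢
      tauto)⟩ with hSb
    set Sabc : StableSet G := ⟨{a, b, c}, hsub _ (fun x hx => hx)⟩ with hSabc
    have hp : X Sab * X Sbc - X Sb * X Sabc ∈ quadPart K G := by
      apply Ideal.subset_span
      refine ⟨⟨Sab, Sbc, Sb, Sabc, rfl⟩, ?_⟩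
      rw [binomial_mem_toricIdeal_iff]
      intro v
      simp only [cnt, hSab, hSbc, hSb, hSabc, Finset.mem_insert, Finset.mem_singleton]
      by_cases hva : v = a <;> by_cases hvb : v = b <;> by_cases hvc : v = c <;> simp_all
    rw [heq] at hp
    have hne : Sb ≠ Sabc := by
      intro hEq
      have : ({b} : Finset (Fin d)) = {a, b, c} := congrArg Subtype.val hEq
      have ha' : a ∈ ({b} : Finset (Fin d)) := by rw [this]; simp
      simp only [Finset.mem_singleton] at ha'
      exact hab ha'
    have hint : ¬ Disjoint Sb.1 Sabc.1 := by
      rw [Finset.not_disjoint_iff]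
      exact ⟨b, by simp [hSb], by simp [hSabc]⟩
    have h0 := coeff_idealJ_zero K G Sb Sabc hne hint hp
    have hEne : (Finsupp.single Sab 1 + Finsupp.single Sbc 1)
        ≠ (Finsupp.single Sb 1 + Finsupp.single Sabc (1 : ℕ)) := by
      intro hE
      have hSabSb : Sab ≠ Sb := by
        intro hEq
        have : ({a, b} : Finset (Fin d)) = {b} := congrArg Subtype.val hEq
        have ha' : a ∈ ({b} : Finset (Fin d)) := by rw [← this]; simp
        simp only [Finset.mem_singleton] at ha'
        exact hab ha'
      have hSbcSb : Sbc ≠ Sb := by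
        intro hEq
        have : ({b, c} : Finset (Fin d)) = {b} := congrArg Subtype.val hEq
        have hc' : c ∈ ({b} : Finset (Fin d)) := by rw [← this]; simp
        simp only [Finset.mem_singleton] at hc'
        exact hbc hc'.symm
      have := DFunLike.congr_fun hE Sb
      simp only [Finsupp.add_apply] at this
      rw [Finsupp.single_eq_of_ne' hSabSb, Finsupp.single_eq_of_ne' hSbcSb,
        Finsupp.single_eq_same, Finsupp.single_eq_of_ne' hne.symm] at this
      omega
    rw [coeff_sub, XX_eq_monomial, XX_eq_monomial] at h0
    simp [coeff_monomial, hEne] at h0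
  · intro hcf
    exact le_antisymm (quadPart_le_idealJ K G hcf) (idealJ_le_quadPart K G)
end

section
/- For k-colorings f and g of a graph G (or of an induced subgraph of G), f ∼ₖ g if and only if x_f − x_g belongs to the Kempe ideal K_G = J_G + M_G. -/
open MvPolynomial

section KempeAux

variable {d k : ℕ} {G : SimpleGraph (Fin d)}

instance {V : Type} [DecidableEq V] (G : SimpleGraph V) : DecidableEq (StableSet G) := by
  unfold StableSet; infer_instance

/-! ### Basic lemmas about colorings and color classes -/

lemma mem_colorClass_iff {f : Fin d → Fin k} {hf : IsColoring G k f} {c : Fin k} {v : Fin d} :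
    v ∈ (colorClass G f hf c).1 ↔ f v = c := by
  simp [colorClass]

lemma kempeEquiv_refl (f : Fin d → Fin k) : KempeEquiv G f f := Relation.ReflTransGen.refl

lemma kempeEquiv_trans {f g h : Fin d → Fin k} (h1 : KempeEquiv G f g) (h2 : KempeEquiv G g h) :
    KempeEquiv G f h := Relation.ReflTransGen.trans h1 h2

lemma kempeStep_symm {f g : Fin d → Fin k} (h : KempeStep G f g) : KempeStep G g f := by
  obtain ⟨hf, hg, i, j, C, ⟨comp, hC⟩, hswap, hout⟩ := h
  have hmemC : ∀ v ∈ C, f v = i ∨ f v = j := by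
    intro v hv; rw [hC] at hv; obtain ⟨x, hx, rfl⟩ := hv; exact x.2
  refine ⟨hg, hf, i, j, C, ?_, ?_, fun v hv => (hout v hv).symm⟩
  · have hset : {v | g v = i ∨ g v = j} = {v | f v = i ∨ f v = j} := by
      ext v
      by_cases hv : v ∈ C
      · simp only [Set.mem_setOf_eq]
        constructor
        · intro _; exact hmemC v hv
        · intro _
          rcases hmemC v hv with h1 | h1
          · exact Or.inr ((hswap v hv).1 h1)
          · exact Or.inl ((hswap v hv).2 h1)
      · simp only [Set.mem_setOf_eq, hout v hv]
    rw [hset]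
    exact ⟨comp, hC⟩
  · intro v hv
    by_cases hij : i = j
    · subst hij
      have hfv : f v = i := by rcases hmemC v hv with h1 | h1 <;> exact h1
      have hgv : g v = i := (hswap v hv).1 hfv
      exact ⟨fun _ => hfv, fun _ => hfv⟩
    · constructor
      · intro hgi
        rcases hmemC v hv with h1 | h1
        · exact absurd (((hswap v hv).1 h1).symm.trans hgi) (fun h : j = i => hij h.symm)
        · exact h1
      · intro hgj
        rcases hmemC v hv with h1 | h1
        · exact h1
        · exact absurd (((hswap v hv).2 h1).symm.trans hgj) hij

lemma kempeEquiv_symm {f g : Fin d → Fin k} (h : KempeEquiv G f g) : KempeEquiv G g f :=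
  by
    induction h with
    | refl => exact Relation.ReflTransGen.refl
    | tail _ hs ih => exact Relation.ReflTransGen.head (kempeStep_symm hs) ih

lemma colorClass_disjoint {f : Fin d → Fin k} {hf : IsColoring G k f} {c1 c2 : Fin k}
    (h : c1 ≠ c2) : Disjoint (colorClass G f hf c1).1 (colorClass G f hf c2).1 := by
  rw [Finset.disjoint_left]
  intro v h1 h2
  rw [mem_colorClass_iff] at h1 h2
  exact h (h1.symm.trans h2)

end KempeAux

section Bridging

variable {d k : ℕ} {G : SimpleGraph (Fin d)}

/-- Propagation along an edge of the induced `{c1,c2}`-subgraph. -/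
lemma bridge_adj_prop {c1 c2 : Fin k} {f g : Fin d → Fin k}
    (hf : IsColoring G k f) (hg : IsColoring G k g)
    (hyp : ∀ v, f v = g v ∨ (f v = c1 ∧ g v = c2) ∨ (f v = c2 ∧ g v = c1))
    {U : Set (Fin d)} (hU : U = {v | f v = c1 ∨ f v = c2})
    (x y : U) (hadj : (G.induce U).Adj x y) (hx : g x.1 ≠ f x.1) : g y.1 ≠ f y.1 := by
  subst hU
  have hGadj : G.Adj x.1 y.1 := hadj
  have hfx : f x.1 = c1 ∨ f x.1 = c2 := x.2
  have hfy : f y.1 = c1 ∨ f y.1 = c2 := y.2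
  have hgx : g x.1 = c1 ∨ g x.1 = c2 := by
    rcases hyp x.1 with h | ⟨_, h⟩ | ⟨_, h⟩
    · rcases hfx with h1 | h1
      · exact Or.inl (h.symm.trans h1)
      · exact Or.inr (h.symm.trans h1)
    · exact Or.inr h
    · exact Or.inl h
  have hgy : g y.1 = c1 ∨ g y.1 = c2 := by
    rcases hyp y.1 with h | ⟨_, h⟩ | ⟨_, h⟩
    · rcases hfy with h1 | h1
      · exact Or.inl (h.symm.trans h1)
      · exact Or.inr (h.symm.trans h1)
    · exact Or.inr h
    · exact Or.inl h
  have hff : f x.1 ≠ f y.1 := hf hGadj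
  have hgg : g x.1 ≠ g y.1 := hg hGadj
  intro hcon
  rcases hfx with h1 | h1 <;> rcases hfy with h2 | h2 <;>
    rcases hgx with h3 | h3 <;> rcases hgy with h4 | h4 <;>
    simp_all

lemma bridge_walk_prop {c1 c2 : Fin k} {f g : Fin d → Fin k}
    (hf : IsColoring G k f) (hg : IsColoring G k g)
    (hyp : ∀ v, f v = g v ∨ (f v = c1 ∧ g v = c2) ∨ (f v = c2 ∧ g v = c1))
    {U : Set (Fin d)} (hU : U = {v | f v = c1 ∨ f v = c2})
    (x y : U) (w : (G.induce U).Walk x y) (hx : g x.1 ≠ f x.1) : g y.1 ≠ f y.1 := by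
  induction w with
  | nil => exact hx
  | cons hadj _ ih => exact ih (bridge_adj_prop hf hg hyp hU _ _ hadj hx)

lemma bridging_aux {c1 c2 : Fin k} (hc : c1 ≠ c2) {f g : Fin d → Fin k}
    (hf : IsColoring G k f) (hg : IsColoring G k g)
    (hyp : ∀ v, f v = g v ∨ (f v = c1 ∧ g v = c2) ∨ (f v = c2 ∧ g v = c1))
    {v0 : Fin d} (h1 : f v0 = c1) (h2 : g v0 = c2) :
    ∃ f' : Fin d → Fin k, KempeStep G f f' ∧
      (∀ v, f' v = g v ∨ (f' v = c1 ∧ g v = c2) ∨ (f' v = c2 ∧ g v = c1)) ∧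
      (Finset.univ.filter fun v => f' v ≠ g v).card <
        (Finset.univ.filter fun v => f v ≠ g v).card := by
  classical
  set U : Set (Fin d) := {v | f v = c1 ∨ f v = c2} with hU
  have hU0 : v0 ∈ U := Or.inl h1
  set H := G.induce U with hH
  set comp := H.connectedComponentMk ⟨v0, hU0⟩ with hcomp
  set C : Set (Fin d) := Subtype.val '' comp.supp with hCdef
  -- membership in C
  have hmemC : ∀ v : Fin d, v ∈ C ↔ ∃ hv : v ∈ U, H.connectedComponentMk ⟨v, hv⟩ = comp := by
    intro v
    constructor
    · rintro ⟨x, hx, rfl⟩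
      exact ⟨x.2, by rwa [SimpleGraph.ConnectedComponent.mem_supp_iff] at hx⟩
    · rintro ⟨hv, hvc⟩
      exact ⟨⟨v, hv⟩, by rwa [SimpleGraph.ConnectedComponent.mem_supp_iff], rfl⟩
  have hCU : ∀ v ∈ C, v ∈ U := fun v hv => ((hmemC v).1 hv).1
  -- on C, g differs from f
  have hdiffC : ∀ v ∈ C, g v ≠ f v := by
    intro v hv
    obtain ⟨hvU, hvc⟩ := (hmemC v).1 hv
    have hreach : H.Reachable ⟨v0, hU0⟩ ⟨v, hvU⟩ :=
      (SimpleGraph.ConnectedComponent.eq).1 hvc.symm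
    obtain ⟨w⟩ := hreach
    exact bridge_walk_prop hf hg hyp hU _ _ w (by rw [h1, h2]; exact fun h => hc h.symm)
  have hgU : ∀ v ∈ U, g v = c1 ∨ g v = c2 := by
    intro v hv
    rcases hyp v with h | ⟨_, h⟩ | ⟨_, h⟩
    · rcases hv with h1 | h1
      · exact Or.inl (h.symm.trans h1)
      · exact Or.inr (h.symm.trans h1)
    · exact Or.inr h
    · exact Or.inl h
  -- the switched coloring
  set f' : Fin d → Fin k := fun v => if v ∈ C then g v else f v with hf'
  have hf'C : ∀ v ∈ C, f' v = g v := fun v hv => by simp [hf', hv]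
  have hf'nC : ∀ v ∉ C, f' v = f v := fun v hv => by simp [hf', hv]
  -- f' is a proper coloring
  have hf'col : IsColoring G k f' := by
    intro u v hadj
    by_cases hu : u ∈ C <;> by_cases hv : v ∈ C
    · rw [hf'C u hu, hf'C v hv]; exact hg hadj
    · rw [hf'C u hu, hf'nC v hv]
      intro hcon
      have huU : u ∈ U := hCU u hu
      have : f v = c1 ∨ f v = c2 := by rw [← hcon]; exact hgU u huU
      have hvU : v ∈ U := this
      have hadjH : H.Adj ⟨u, huU⟩ ⟨v, hvU⟩ := hadj
      have : H.connectedComponentMk ⟨v, hvU⟩ = comp := by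
        rw [← ((hmemC u).1 hu).2]
        exact (SimpleGraph.ConnectedComponent.eq).2 (hadjH.symm.reachable)
      exact hv ((hmemC v).2 ⟨hvU, this⟩)
    · rw [hf'C v hv, hf'nC u hu]
      intro hcon
      have hvU : v ∈ U := hCU v hv
      have : f u = c1 ∨ f u = c2 := by rw [hcon]; exact hgU v hvU
      have huU : u ∈ U := this
      have hadjH : H.Adj ⟨u, huU⟩ ⟨v, hvU⟩ := hadj
      have : H.connectedComponentMk ⟨u, huU⟩ = comp := by
        rw [← ((hmemC v).1 hv).2]
        exact (SimpleGraph.ConnectedComponent.eq).2 (hadjH.reachable)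
      exact hu ((hmemC u).2 ⟨huU, this⟩)
    · rw [hf'nC u hu, hf'nC v hv]; exact hf hadj
  refine ⟨f', ⟨hf, hf'col, c1, c2, C, ⟨comp, rfl⟩, ?_, hf'nC⟩, ?_, ?_⟩
  · intro v hv
    have hvU := hCU v hv
    have hne := hdiffC v hv
    constructor
    · intro hfc
      rw [hf'C v hv]
      rcases hgU v hvU with h | h
      · exact absurd (h.trans hfc.symm) hne
      · exact h
    · intro hfc
      rw [hf'C v hv]
      rcases hgU v hvU with h | h
      · exact h
      · exact absurd (h.trans hfc.symm) hne
  · intro v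
    by_cases hv : v ∈ C
    · exact Or.inl (hf'C v hv)
    · rw [hf'nC v hv]; exact hyp v
  · apply Finset.card_lt_card
    rw [Finset.ssubset_iff_of_subset]
    · refine ⟨v0, ?_, ?_⟩
      · simp only [Finset.mem_filter, Finset.mem_univ, true_and]
        rw [h1, h2]; exact fun h => hc h
      · have hv0C : v0 ∈ C := (hmemC v0).2 ⟨hU0, rfl⟩
        simp only [Finset.mem_filter, Finset.mem_univ, true_and, not_not]
        exact hf'C v0 hv0C
    · intro v hv
      simp only [Finset.mem_filter, Finset.mem_univ, true_and] at hv ⊢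
      by_cases hvC : v ∈ C
      · exact absurd (hf'C v hvC) hv
      · rwa [hf'nC v hvC] at hv

lemma bridging {c1 c2 : Fin k} {f g : Fin d → Fin k}
    (hf : IsColoring G k f) (hg : IsColoring G k g)
    (hyp : ∀ v, f v = g v ∨ (f v = c1 ∧ g v = c2) ∨ (f v = c2 ∧ g v = c1)) :
    KempeEquiv G f g := by
  classical
  generalize hn : (Finset.univ.filter fun v => f v ≠ g v).card = n
  induction n using Nat.strong_induction_on generalizing f with
  | _ n ih =>
    by_cases hfg : f = g
    · subst hfg; exact kempeEquiv_refl f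
    · have : ∃ v0, f v0 ≠ g v0 := by
        by_contra hcon
        push_neg at hcon
        exact hfg (funext hcon)
      obtain ⟨v0, hv0⟩ := this
      have hc : c1 ≠ c2 := by
        rcases hyp v0 with h | ⟨ha, hb⟩ | ⟨ha, hb⟩
        · exact absurd h hv0
        · intro hcc; exact hv0 ((ha.trans hcc).trans hb.symm)
        · intro hcc; exact hv0 ((ha.trans hcc.symm).trans hb.symm)
      rcases hyp v0 with h | ⟨ha, hb⟩ | ⟨ha, hb⟩
      · exact absurd h hv0
      · obtain ⟨f', hstep, hyp', hlt⟩ := bridging_aux hc hf hg hyp ha hb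
        rw [hn] at hlt
        exact Relation.ReflTransGen.head hstep
          (ih _ hlt hstep.2.1 hyp' rfl)
      · have hyp2 : ∀ v, f v = g v ∨ (f v = c2 ∧ g v = c1) ∨ (f v = c1 ∧ g v = c2) := by
          intro v; rcases hyp v with h | h | h
          · exact Or.inl h
          · exact Or.inr (Or.inr h)
          · exact Or.inr (Or.inl h)
        obtain ⟨f', hstep, hyp', hlt⟩ := bridging_aux hc.symm hf hg hyp2 ha hb
        rw [hn] at hlt
        have hyp'' : ∀ v, f' v = g v ∨ (f' v = c1 ∧ g v = c2) ∨ (f' v = c2 ∧ g v = c1) := by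
          intro v; rcases hyp' v with h | h | h
          · exact Or.inl h
          · exact Or.inr (Or.inr h)
          · exact Or.inr (Or.inl h)
        exact Relation.ReflTransGen.head hstep
          (ih _ hlt hstep.2.1 hyp'' rfl)

end Bridging

section PermExpo

variable {d k : ℕ} {G : SimpleGraph (Fin d)}

lemma isColoring_comp {f : Fin d → Fin k} (hf : IsColoring G k f) (σ : Equiv.Perm (Fin k)) :
    IsColoring G k (⇑σ ∘ f) := fun _ _ hadj => σ.injective.ne (hf hadj)

lemma perm_equiv (σ : Equiv.Perm (Fin k)) :
    ∀ f : Fin d → Fin k, IsColoring G k f → KempeEquiv G f (⇑σ ∘ f) := by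
  refine Equiv.Perm.swap_induction_on
    (motive := fun σ => ∀ f : Fin d → Fin k, IsColoring G k f → KempeEquiv G f (⇑σ ∘ f)) σ ?_ ?_
  · intro f hf
    have : ⇑(1 : Equiv.Perm (Fin k)) ∘ f = f := funext fun v => rfl
    rw [this]
    exact kempeEquiv_refl f
  · intro τ x y hxy ih f hf
    have h1 : KempeEquiv G f (⇑τ ∘ f) := ih f hf
    have h2 : KempeEquiv G (⇑τ ∘ f) (⇑(Equiv.swap x y) ∘ (⇑τ ∘ f)) := by
      apply bridging (c1 := x) (c2 := y) (isColoring_comp hf τ)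
        (isColoring_comp (isColoring_comp hf τ) (Equiv.swap x y))
      intro v
      simp only [Function.comp_apply]
      by_cases hcx : τ (f v) = x
      · right; left
        rw [hcx, Equiv.swap_apply_left]; exact ⟨rfl, rfl⟩
      · by_cases hcy : τ (f v) = y
        · right; right
          rw [hcy, Equiv.swap_apply_right]; exact ⟨rfl, rfl⟩
        · left
          rw [Equiv.swap_apply_of_ne_of_ne hcx hcy]
    have : ⇑(Equiv.swap x y * τ) ∘ f = ⇑(Equiv.swap x y) ∘ (⇑τ ∘ f) := rfl
    rw [this]
    exact kempeEquiv_trans h1 h2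

/-- The exponent vector of the coloring monomial. -/
noncomputable def expo (G : SimpleGraph (Fin d)) {k : ℕ} (f : Fin d → Fin k)
    (hf : IsColoring G k f) : StableSet G →₀ ℕ :=
  ∑ c : Fin k, Finsupp.single (colorClass G f hf c) 1

lemma expo_apply {f : Fin d → Fin k} (hf : IsColoring G k f) (S : StableSet G) :
    expo G f hf S = (Finset.univ.filter fun c => colorClass G f hf c = S).card := by
  classical
  rw [expo, Finsupp.finset_sum_apply, Finset.card_filter]
  apply Finset.sum_congr rfl
  intro c _
  rw [Finsupp.single_apply]

lemma xMonomial_eq (K : Type) [Field K] {f : Fin d → Fin k} (hf : IsColoring G k f) :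
    xMonomial K G f hf = MvPolynomial.monomial (expo G f hf) 1 := by
  classical
  rw [xMonomial, expo]
  induction (Finset.univ : Finset (Fin k)) using Finset.induction_on with
  | empty => simp
  | insert _ _ hx ih =>
    rw [Finset.prod_insert hx, Finset.sum_insert hx, ih]
    rw [show (MvPolynomial.X (colorClass G f hf _) : MvPolynomial (StableSet G) K)
        = MvPolynomial.monomial (Finsupp.single (colorClass G f hf _) 1) 1 from rfl,
      MvPolynomial.monomial_mul, one_mul]

lemma exists_color_of_one_le {f : Fin d → Fin k} {hf : IsColoring G k f} {S : StableSet G}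
    (h : 1 ≤ expo G f hf S) : ∃ c, colorClass G f hf c = S := by
  classical
  rw [expo_apply] at h
  obtain ⟨c, hc⟩ := Finset.card_pos.1 h
  exact ⟨c, (Finset.mem_filter.1 hc).2⟩

lemma exists_two_colors_of_two_le {f : Fin d → Fin k} {hf : IsColoring G k f} {S : StableSet G}
    (h : 2 ≤ expo G f hf S) :
    ∃ c1 c2, c1 ≠ c2 ∧ colorClass G f hf c1 = S ∧ colorClass G f hf c2 = S := by
  classical
  rw [expo_apply] at h
  obtain ⟨c1, hc1, c2, hc2, hne⟩ := Finset.one_lt_card.1 h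
  exact ⟨c1, c2, hne, (Finset.mem_filter.1 hc1).2, (Finset.mem_filter.1 hc2).2⟩

/-- Colorings with the same exponent vector are Kempe equivalent. -/
lemma expo_eq_equiv {f g : Fin d → Fin k} {hf : IsColoring G k f} {hg : IsColoring G k g}
    (h : expo G f hf = expo G g hg) : KempeEquiv G f g := by
  classical
  have hcard : ∀ S : StableSet G,
      Fintype.card {c : Fin k // colorClass G g hg c = S}
        = Fintype.card {c : Fin k // colorClass G f hf c = S} := by
    intro S
    rw [Fintype.card_subtype, Fintype.card_subtype, ← expo_apply hf, ← expo_apply hg, h]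
  have e : ∀ S : StableSet G,
      {c : Fin k // colorClass G g hg c = S} ≃ {c : Fin k // colorClass G f hf c = S} :=
    fun S => Fintype.equivOfCardEq (hcard S)
  set σ : Equiv.Perm (Fin k) :=
    ((Equiv.sigmaFiberEquiv (colorClass G g hg)).symm.trans
      (Equiv.sigmaCongrRight e)).trans (Equiv.sigmaFiberEquiv (colorClass G f hf)) with hσ
  have hprop : ∀ c : Fin k, colorClass G f hf (σ c) = colorClass G g hg c := by
    intro c
    have : σ c = (e (colorClass G g hg c) ⟨c, rfl⟩).1 := rfl
    rw [this]
    exact (e (colorClass G g hg c) ⟨c, rfl⟩).2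
  have hfg : f = ⇑σ ∘ g := by
    funext v
    have hv : v ∈ (colorClass G f hf (σ (g v))).1 := by
      rw [hprop (g v), mem_colorClass_iff]
    exact mem_colorClass_iff.1 hv
  have := perm_equiv σ g hg
  rw [← hfg] at this
  exact kempeEquiv_symm this

end PermExpo

section JMove

variable {d k : ℕ} {G : SimpleGraph (Fin d)}

lemma no_coloring_of_overlap {S T : StableSet G} (hST : (S.1 ∩ T.1).Nonempty)
    (m : StableSet G →₀ ℕ) :
    ¬ ∃ (f : Fin d → Fin k) (hf : IsColoring G k f),
        expo G f hf = m + Finsupp.single S 1 + Finsupp.single T 1 := by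
  classical
  rintro ⟨f, hf, he⟩
  obtain ⟨x, hx⟩ := hST
  rw [Finset.mem_inter] at hx
  have key : ∃ c1 c2 : Fin k, c1 ≠ c2 ∧ colorClass G f hf c1 = S ∧ colorClass G f hf c2 = T := by
    by_cases hSTeq : S = T
    · subst hSTeq
      have : 2 ≤ expo G f hf S := by
        rw [he]
        simp only [Finsupp.add_apply, Finsupp.single_apply, eq_self_iff_true, if_true]
        omega
      exact exists_two_colors_of_two_le this
    · have h1 : 1 ≤ expo G f hf S := by
        rw [he, Finsupp.add_apply, Finsupp.add_apply, Finsupp.single_apply, if_pos rfl]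
        omega
      have h2 : 1 ≤ expo G f hf T := by
        rw [he, Finsupp.add_apply, Finsupp.add_apply, Finsupp.single_apply (a := T),
          if_pos rfl]
        omega
      obtain ⟨c1, hc1⟩ := exists_color_of_one_le h1
      obtain ⟨c2, hc2⟩ := exists_color_of_one_le h2
      refine ⟨c1, c2, ?_, hc1, hc2⟩
      intro hcc
      exact hSTeq (hc1 ▸ hcc ▸ hc2)
  obtain ⟨c1, c2, hne, hc1, hc2⟩ := key
  have hx1 : f x = c1 := mem_colorClass_iff.1 (hc1 ▸ hx.1)
  have hx2 : f x = c2 := mem_colorClass_iff.1 (hc2 ▸ hx.2)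
  exact hne (hx1.symm.trans hx2)

lemma jmove {S1 S2 S3 S4 : StableSet G} (h12 : Disjoint S1.1 S2.1) (h34 : Disjoint S3.1 S4.1)
    (hu : S1.1 ∪ S2.1 = S3.1 ∪ S4.1) (m : StableSet G →₀ ℕ) {f : Fin d → Fin k}
    (hf : IsColoring G k f)
    (he : expo G f hf = m + Finsupp.single S1 1 + Finsupp.single S2 1) :
    ∃ (g : Fin d → Fin k) (hg : IsColoring G k g),
      expo G g hg = m + Finsupp.single S3 1 + Finsupp.single S4 1 ∧ KempeEquiv G f g := by
  classical
  by_cases h12eq : S1 = S2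
  · -- degenerate: all sets empty
    have hS1 : S1.1 = ∅ := by
      have := h12
      rw [h12eq, Finset.disjoint_self_iff_empty] at this
      rw [h12eq]; exact this
    have hS2 : S2.1 = ∅ := by rw [← h12eq]; exact hS1
    have hS3 : S3.1 = ∅ := by
      have : S3.1 ∪ S4.1 = ∅ := by rw [← hu, hS1, hS2]; simp
      exact Finset.union_eq_empty.1 this |>.1
    have hS4 : S4.1 = ∅ := by
      have : S3.1 ∪ S4.1 = ∅ := by rw [← hu, hS1, hS2]; simp
      exact Finset.union_eq_empty.1 this |>.2
    have e13 : S1 = S3 := Subtype.ext (hS1.trans hS3.symm)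
    have e24 : S2 = S4 := Subtype.ext (hS2.trans hS4.symm)
    exact ⟨f, hf, by rw [← e13, ← e24]; exact he, kempeEquiv_refl f⟩
  · have h1 : 1 ≤ expo G f hf S1 := by
      rw [he, Finsupp.add_apply, Finsupp.add_apply, Finsupp.single_apply, if_pos rfl]
      omega
    have h2 : 1 ≤ expo G f hf S2 := by
      rw [he, Finsupp.add_apply, Finsupp.add_apply, Finsupp.single_apply (a := S2), if_pos rfl]
      omega
    obtain ⟨c1, hc1⟩ := exists_color_of_one_le h1
    obtain ⟨c2, hc2⟩ := exists_color_of_one_le h2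
    have hcc : c1 ≠ c2 := fun h => h12eq (by rw [← hc1, ← hc2, h])
    have hA : ∀ v, f v = c1 ↔ v ∈ S1.1 := fun v => by rw [← hc1, mem_colorClass_iff]
    have hB : ∀ v, f v = c2 ↔ v ∈ S2.1 := fun v => by rw [← hc2, mem_colorClass_iff]
    have hmem34 : ∀ v, (f v = c1 ∨ f v = c2) ↔ (v ∈ S3.1 ∨ v ∈ S4.1) := by
      intro v
      rw [hA, hB, ← Finset.mem_union, ← Finset.mem_union, hu]
    set g : Fin d → Fin k := fun v =>
      if f v = c1 ∨ f v = c2 then (if v ∈ S3.1 then c1 else c2) else f v with hgdef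
    have hgin : ∀ v, (f v = c1 ∨ f v = c2) → g v = (if v ∈ S3.1 then c1 else c2) := by
      intro v hv; simp only [hgdef, if_pos hv]
    have hgout : ∀ v, ¬(f v = c1 ∨ f v = c2) → g v = f v := by
      intro v hv; simp only [hgdef, if_neg hv]
    have hg : IsColoring G k g := by
      intro u v hadj
      by_cases hu' : f u = c1 ∨ f u = c2 <;> by_cases hv' : f v = c1 ∨ f v = c2
      · rw [hgin u hu', hgin v hv']
        by_cases h3u : u ∈ S3.1 <;> by_cases h3v : v ∈ S3.1
        · exact absurd hadj (S3.2 h3u h3v)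
        · rw [if_pos h3u, if_neg h3v]; exact hcc
        · rw [if_neg h3u, if_pos h3v]; exact hcc.symm
        · have h4u : u ∈ S4.1 := ((hmem34 u).1 hu').resolve_left h3u
          have h4v : v ∈ S4.1 := ((hmem34 v).1 hv').resolve_left h3v
          exact absurd hadj (S4.2 h4u h4v)
      · rw [hgin u hu', hgout v hv']
        intro hcon
        apply hv'
        rw [← hcon]
        by_cases h3u : u ∈ S3.1
        · rw [if_pos h3u]; exact Or.inl rfl
        · rw [if_neg h3u]; exact Or.inr rfl
      · rw [hgout u hu', hgin v hv']
        intro hcon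
        apply hu'
        rw [hcon]
        by_cases h3v : v ∈ S3.1
        · rw [if_pos h3v]; exact Or.inl rfl
        · rw [if_neg h3v]; exact Or.inr rfl
      · rw [hgout u hu', hgout v hv']; exact hf hadj
    have hgc1 : colorClass G g hg c1 = S3 := by
      apply Subtype.ext
      ext v
      rw [mem_colorClass_iff]
      by_cases hv' : f v = c1 ∨ f v = c2
      · rw [hgin v hv']
        by_cases h3v : v ∈ S3.1
        · rw [if_pos h3v]; exact ⟨fun _ => h3v, fun _ => rfl⟩
        · rw [if_neg h3v]
          exact ⟨fun h => absurd h.symm hcc, fun h => absurd h h3v⟩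
      · rw [hgout v hv']
        constructor
        · intro h; exact absurd (Or.inl h) hv'
        · intro h3v
          exfalso
          exact hv' ((hmem34 v).2 (Or.inl h3v))
    have hgc2 : colorClass G g hg c2 = S4 := by
      apply Subtype.ext
      ext v
      rw [mem_colorClass_iff]
      by_cases hv' : f v = c1 ∨ f v = c2
      · rw [hgin v hv']
        by_cases h3v : v ∈ S3.1
        · rw [if_pos h3v]
          constructor
          · intro h; exact absurd h hcc
          · intro h4v; exact absurd h4v (Finset.disjoint_left.1 h34 h3v)
        · rw [if_neg h3v]
          constructor
          · intro _; exact ((hmem34 v).1 hv').resolve_left h3v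
          · intro _; rfl
      · rw [hgout v hv']
        constructor
        · intro h; exact absurd (Or.inr h) hv'
        · intro h4v
          exfalso
          exact hv' ((hmem34 v).2 (Or.inr h4v))
    have hgrest : ∀ c, c ≠ c1 → c ≠ c2 → colorClass G g hg c = colorClass G f hf c := by
      intro c hne1 hne2
      apply Subtype.ext
      ext v
      rw [mem_colorClass_iff, mem_colorClass_iff]
      by_cases hv' : f v = c1 ∨ f v = c2
      · rw [hgin v hv']
        constructor
        · intro h
          exfalso
          by_cases h3v : v ∈ S3.1
          · rw [if_pos h3v] at h; exact hne1 h.symm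
          · rw [if_neg h3v] at h; exact hne2 h.symm
        · intro h
          exfalso
          rcases hv' with h' | h'
          · exact hne1 (h.symm.trans h')
          · exact hne2 (h.symm.trans h')
      · rw [hgout v hv']
    -- exponent computation
    have hc2mem : c2 ∈ Finset.univ.erase c1 := Finset.mem_erase.2 ⟨hcc.symm, Finset.mem_univ _⟩
    have hsplit : ∀ (h' : Fin k → StableSet G →₀ ℕ),
        ∑ c : Fin k, h' c = h' c1 + h' c2 + ∑ c ∈ (Finset.univ.erase c1).erase c2, h' c := by
      intro h'
      rw [add_assoc, Finset.add_sum_erase _ h' hc2mem, Finset.add_sum_erase _ h' (Finset.mem_univ c1)]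
    have hrest_eq : ∑ c ∈ (Finset.univ.erase c1).erase c2, Finsupp.single (colorClass G g hg c) (1:ℕ)
        = ∑ c ∈ (Finset.univ.erase c1).erase c2, Finsupp.single (colorClass G f hf c) 1 := by
      apply Finset.sum_congr rfl
      intro c hc
      rw [Finset.mem_erase, Finset.mem_erase] at hc
      rw [hgrest c hc.2.1 hc.1]
    have hexpog : expo G g hg = m + Finsupp.single S3 1 + Finsupp.single S4 1 := by
      have hef : expo G f hf = Finsupp.single S1 1 + Finsupp.single S2 1
          + ∑ c ∈ (Finset.univ.erase c1).erase c2, Finsupp.single (colorClass G f hf c) 1 := by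
        rw [expo, hsplit, hc1, hc2]
      have heg : expo G g hg = Finsupp.single S3 1 + Finsupp.single S4 1
          + ∑ c ∈ (Finset.univ.erase c1).erase c2, Finsupp.single (colorClass G f hf c) 1 := by
        rw [expo, hsplit, hgc1, hgc2, hrest_eq]
      have hmval : m = ∑ c ∈ (Finset.univ.erase c1).erase c2,
          Finsupp.single (colorClass G f hf c) 1 := by
        have := he.symm.trans hef
        -- m + single S1 1 + single S2 1 = single S1 1 + single S2 1 + rest
        have h' : Finsupp.single S1 1 + Finsupp.single S2 1 + m
            = Finsupp.single S1 1 + Finsupp.single S2 1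
              + ∑ c ∈ (Finset.univ.erase c1).erase c2, Finsupp.single (colorClass G f hf c) 1 := by
          rw [← this]; abel
        exact add_left_cancel h'
      rw [heg, hmval]; abel
    refine ⟨g, hg, hexpog, ?_⟩
    apply bridging (c1 := c1) (c2 := c2) hf hg
    intro v
    by_cases hv' : f v = c1 ∨ f v = c2
    · rw [hgin v hv']
      by_cases h3v : v ∈ S3.1
      · rw [if_pos h3v]
        rcases hv' with h' | h'
        · exact Or.inl h'
        · exact Or.inr (Or.inr ⟨h', rfl⟩)
      · rw [if_neg h3v]
        rcases hv' with h' | h'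
        · exact Or.inr (Or.inl ⟨h', rfl⟩)
        · exact Or.inl h'
    · rw [hgout v hv']
      exact Or.inl rfl

end JMove

section Algebra

variable {d : ℕ} (G : SimpleGraph (Fin d)) (k : ℕ)

/-- Quotient of `k`-colorings by Kempe equivalence (as plain functions). -/
def kquot : Type := Quot (fun f g : Fin d → Fin k => KempeEquiv G f g)

/-- The Kempe class of a coloring. -/
def kclass (f : Fin d → Fin k) : kquot G k :=
  Quot.mk (fun f g : Fin d → Fin k => KempeEquiv G f g) f

open scoped Classical in
/-- The class of a monomial: the Kempe class of an associated coloring, if any. -/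
noncomputable def mu (m : StableSet G →₀ ℕ) : Option (kquot G k) :=
  if h : ∃ (f : Fin d → Fin k) (hf : IsColoring G k f), expo G f hf = m
    then some (kclass G k h.choose) else none

lemma mu_eq_some {f : Fin d → Fin k} (hf : IsColoring G k f) :
    mu G k (expo G f hf) = some (kclass G k f) := by
  have h : ∃ (f' : Fin d → Fin k) (hf' : IsColoring G k f'), expo G f' hf' = expo G f hf :=
    ⟨f, hf, rfl⟩
  rw [mu, dif_pos h]
  congr 1
  apply Quot.sound
  obtain ⟨hf', hspec⟩ := h.choose_spec
  exact expo_eq_equiv hspec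

lemma mu_jmove {S1 S2 S3 S4 : StableSet G} (h12 : Disjoint S1.1 S2.1)
    (h34 : Disjoint S3.1 S4.1) (hu : S1.1 ∪ S2.1 = S3.1 ∪ S4.1) (m : StableSet G →₀ ℕ) :
    mu G k (m + (Finsupp.single S1 1 + Finsupp.single S2 1))
      = mu G k (m + (Finsupp.single S3 1 + Finsupp.single S4 1)) := by
  classical
  by_cases hex1 : ∃ (f : Fin d → Fin k) (hf : IsColoring G k f),
      expo G f hf = m + (Finsupp.single S1 1 + Finsupp.single S2 1)
  · obtain ⟨f, hfc, hfe⟩ := hex1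
    obtain ⟨g, hg, hge, hequiv⟩ := jmove h12 h34 hu m hfc (hfe.trans (add_assoc _ _ _).symm)
    have hge' : expo G g hg = m + (Finsupp.single S3 1 + Finsupp.single S4 1) :=
      hge.trans (add_assoc _ _ _)
    rw [← hfe, ← hge', mu_eq_some G k hfc, mu_eq_some G k hg]
    exact congrArg some (Quot.sound hequiv)
  · by_cases hex2 : ∃ (f : Fin d → Fin k) (hf : IsColoring G k f),
        expo G f hf = m + (Finsupp.single S3 1 + Finsupp.single S4 1)
    · exfalso
      obtain ⟨f, hfc, hfe⟩ := hex2
      obtain ⟨g, hg, hge, _⟩ := jmove h34 h12 hu.symm m hfc (hfe.trans (add_assoc _ _ _).symm)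
      exact hex1 ⟨g, hg, hge.trans (add_assoc _ _ _)⟩
    · rw [mu, dif_neg hex1, mu, dif_neg hex2]

lemma mu_overlap {S T : StableSet G} (hST : (S.1 ∩ T.1).Nonempty) (m : StableSet G →₀ ℕ) :
    mu G k (m + (Finsupp.single S 1 + Finsupp.single T 1)) = none := by
  rw [mu, dif_neg]
  intro h
  obtain ⟨f, hfc, hfe⟩ := h
  exact no_coloring_of_overlap hST m ⟨f, hfc, hfe.trans (add_assoc _ _ _).symm⟩

variable (K : Type) [Field K]

/-- The linear map sending a monomial to the indicator of its Kempe class. -/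
noncomputable def Phi : MvPolynomial (StableSet G) K →ₗ[K] (Option (kquot G k) →₀ K) :=
  (MvPolynomial.basisMonomials (StableSet G) K).constr K fun m => Finsupp.single (mu G k m) 1

lemma Phi_monomial (m : StableSet G →₀ ℕ) (c : K) :
    Phi G k K (MvPolynomial.monomial m c) = c • Finsupp.single (mu G k m) 1 := by
  have h1 : (MvPolynomial.monomial m c : MvPolynomial (StableSet G) K)
      = c • MvPolynomial.monomial m 1 := by
    rw [MvPolynomial.smul_monomial, smul_eq_mul, mul_one]
  have hb : (MvPolynomial.basisMonomials (StableSet G) K) m = MvPolynomial.monomial m 1 := by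
    rw [MvPolynomial.coe_basisMonomials]
  rw [h1, map_smul, Phi, ← hb, Module.Basis.constr_basis]

lemma Phi_mul_monomial (q : MvPolynomial (StableSet G) K) (e : StableSet G →₀ ℕ) :
    Phi G k K (q * MvPolynomial.monomial e 1)
      = ∑ m ∈ q.support, MvPolynomial.coeff m q • Finsupp.single (mu G k (m + e)) (1:K) := by
  conv_lhs => rw [← MvPolynomial.support_sum_monomial_coeff q]
  rw [Finset.sum_mul, map_sum]
  apply Finset.sum_congr rfl
  intro m _
  rw [MvPolynomial.monomial_mul, mul_one, Phi_monomial]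

lemma X_mul_X (S T : StableSet G) :
    (MvPolynomial.X S * MvPolynomial.X T : MvPolynomial (StableSet G) K)
      = MvPolynomial.monomial (Finsupp.single S 1 + Finsupp.single T 1) 1 := by
  have hX : ∀ U : StableSet G, (MvPolynomial.X U : MvPolynomial (StableSet G) K)
      = MvPolynomial.monomial (Finsupp.single U 1) 1 := fun _ => rfl
  rw [hX, hX, MvPolynomial.monomial_mul, one_mul]

lemma Phi_J (p : MvPolynomial (StableSet G) K) (hp : p ∈ idealJ K G) :
    ∀ q, Phi G k K (q * p)
      ∈ Submodule.span K {Finsupp.single (none : Option (kquot G k)) (1:K)} := by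
  refine Submodule.span_induction
    (p := fun x _ => ∀ q, Phi G k K (q * x)
      ∈ Submodule.span K {Finsupp.single (none : Option (kquot G k)) (1:K)}) ?_ ?_ ?_ ?_ hp
  · rintro x ⟨S1, S2, S3, S4, h12, h34, hu, rfl⟩ q
    rw [mul_sub, map_sub, X_mul_X, X_mul_X, Phi_mul_monomial, Phi_mul_monomial]
    have : ∀ m ∈ q.support,
        MvPolynomial.coeff m q • Finsupp.single (mu G k (m + (Finsupp.single S1 1 + Finsupp.single S2 1))) (1:K)
          = MvPolynomial.coeff m q • Finsupp.single (mu G k (m + (Finsupp.single S3 1 + Finsupp.single S4 1))) (1:K) := by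
      intro m _
      rw [mu_jmove G k h12 h34 hu m]
    rw [Finset.sum_congr rfl this, sub_self]
    exact zero_mem _
  · intro q
    rw [mul_zero, map_zero]
    exact zero_mem _
  · intro x y _ _ hx hy q
    rw [mul_add, map_add]
    exact add_mem (hx q) (hy q)
  · intro a x _ hx q
    rw [smul_eq_mul, show q * (a * x) = (q * a) * x by ring]
    exact hx (q * a)

lemma Phi_M (p : MvPolynomial (StableSet G) K) (hp : p ∈ idealM K G) :
    ∀ q, Phi G k K (q * p)
      ∈ Submodule.span K {Finsupp.single (none : Option (kquot G k)) (1:K)} := by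
  refine Submodule.span_induction
    (p := fun x _ => ∀ q, Phi G k K (q * x)
      ∈ Submodule.span K {Finsupp.single (none : Option (kquot G k)) (1:K)}) ?_ ?_ ?_ ?_ hp
  · rintro x ⟨S, T, hST, rfl⟩ q
    rw [X_mul_X, Phi_mul_monomial]
    apply Submodule.sum_mem
    intro m _
    rw [mu_overlap G k hST m]
    exact Submodule.smul_mem _ _ (Submodule.subset_span rfl)
  · intro q
    rw [mul_zero, map_zero]
    exact zero_mem _
  · intro x y _ _ hx hy q
    rw [mul_add, map_add]
    exact add_mem (hx q) (hy q)
  · intro a x _ hx q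
    rw [smul_eq_mul, show q * (a * x) = (q * a) * x by ring]
    exact hx (q * a)

end Algebra

section Forward

variable {d k : ℕ} {G : SimpleGraph (Fin d)} (K : Type) [Field K]

lemma step_mem {f g : Fin d → Fin k} (hstep : KempeStep G f g)
    (hf : IsColoring G k f) (hg : IsColoring G k g) :
    xMonomial K G f hf - xMonomial K G g hg ∈ kempeIdeal K G := by
  classical
  obtain ⟨hf', hg', i, j, C, ⟨comp, hC⟩, hswap, hout⟩ := hstep
  have hmemC : ∀ v ∈ C, f v = i ∨ f v = j := by
    intro v hv; rw [hC] at hv; obtain ⟨x, hx, rfl⟩ := hv; exact x.2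
  by_cases hij : i = j
  · subst hij
    have hfg : f = g := by
      funext v
      by_cases hv : v ∈ C
      · have hfv : f v = i := by rcases hmemC v hv with h | h <;> exact h
        rw [hfv, ((hswap v hv).1 hfv)]
      · exact (hout v hv).symm
    subst hfg
    cases Subsingleton.elim hf hg
    rw [sub_self]
    exact zero_mem _
  · have hsetval : ∀ v, (g v = i ∨ g v = j) ↔ (f v = i ∨ f v = j) := by
      intro v
      by_cases hv : v ∈ C
      · constructor
        · intro _; exact hmemC v hv
        · intro _
          rcases hmemC v hv with h | h
          · exact Or.inr ((hswap v hv).1 h)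
          · exact Or.inl ((hswap v hv).2 h)
      · rw [hout v hv]
    have hclass_rest : ∀ c, c ≠ i → c ≠ j → colorClass G g hg c = colorClass G f hf c := by
      intro c hci hcj
      apply Subtype.ext
      ext v
      rw [mem_colorClass_iff, mem_colorClass_iff]
      by_cases hv : v ∈ C
      · constructor
        · intro h
          exfalso
          rcases hmemC v hv with h' | h'
          · exact hcj (h.symm.trans ((hswap v hv).1 h'))
          · exact hci (h.symm.trans ((hswap v hv).2 h'))
        · intro h
          exfalso
          rcases hmemC v hv with h' | h'
          · exact hci (h.symm.trans h')
          · exact hcj (h.symm.trans h')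
      · rw [hout v hv]
    have hdisj1 : Disjoint (colorClass G f hf i).1 (colorClass G f hf j).1 :=
      colorClass_disjoint hij
    have hdisj2 : Disjoint (colorClass G g hg i).1 (colorClass G g hg j).1 :=
      colorClass_disjoint hij
    have hunion : (colorClass G f hf i).1 ∪ (colorClass G f hf j).1
        = (colorClass G g hg i).1 ∪ (colorClass G g hg j).1 := by
      ext v
      rw [Finset.mem_union, Finset.mem_union, mem_colorClass_iff, mem_colorClass_iff,
        mem_colorClass_iff, mem_colorClass_iff]
      exact (hsetval v).symm
    have hjmem : j ∈ Finset.univ.erase i :=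
      Finset.mem_erase.2 ⟨fun h => hij h.symm, Finset.mem_univ _⟩
    have hsplit : ∀ (h' : IsColoring G k f) (hfun : Fin k → MvPolynomial (StableSet G) K),
        ∏ c : Fin k, hfun c
          = (hfun i * hfun j) * ∏ c ∈ (Finset.univ.erase i).erase j, hfun c := by
      intro _ hfun
      rw [mul_assoc, Finset.mul_prod_erase _ hfun hjmem,
        Finset.mul_prod_erase _ hfun (Finset.mem_univ i)]
    have hsplitf : xMonomial K G f hf
        = (MvPolynomial.X (colorClass G f hf i) * MvPolynomial.X (colorClass G f hf j))
          * ∏ c ∈ (Finset.univ.erase i).erase j, MvPolynomial.X (colorClass G f hf c) := by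
      rw [xMonomial]; exact hsplit hf _
    have hsplitg : xMonomial K G g hg
        = (MvPolynomial.X (colorClass G g hg i) * MvPolynomial.X (colorClass G g hg j))
          * ∏ c ∈ (Finset.univ.erase i).erase j, MvPolynomial.X (colorClass G f hf c) := by
      rw [xMonomial]
      rw [hsplit hf (fun c => MvPolynomial.X (colorClass G g hg c))]
      congr 1
      apply Finset.prod_congr rfl
      intro c hc
      rw [Finset.mem_erase, Finset.mem_erase] at hc
      rw [hclass_rest c hc.2.1 hc.1]
    rw [hsplitf, hsplitg, ← sub_mul]
    rw [kempeIdeal, Submodule.add_eq_sup]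
    apply Submodule.mem_sup_left
    apply Ideal.mul_mem_right
    apply Ideal.subset_span
    exact ⟨colorClass G f hf i, colorClass G f hf j, colorClass G g hg i, colorClass G g hg j,
      hdisj1, hdisj2, hunion, rfl⟩

lemma equiv_mem {f g : Fin d → Fin k} (h : KempeEquiv G f g) (hf : IsColoring G k f) :
    ∀ hg : IsColoring G k g, xMonomial K G f hf - xMonomial K G g hg ∈ kempeIdeal K G := by
  induction h with
  | refl =>
    intro hg
    cases Subsingleton.elim hf hg
    rw [sub_self]
    exact zero_mem _
  | @tail b c _ hstep ih =>
    intro hg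
    have hb := hstep.1
    have h2 := step_mem K hstep hb hg
    have h1 := ih hb
    have heq : xMonomial K G f hf - xMonomial K G c hg
        = (xMonomial K G f hf - xMonomial K G b hb)
          + (xMonomial K G b hb - xMonomial K G c hg) := by ring
    rw [heq]
    exact add_mem h1 h2

end Forward


theorem kempe_equiv_iff_mem_kempeIdeal {d k : ℕ} (G : SimpleGraph (Fin d))
    (K : Type) [Field K] (f g : Fin d → Fin k)
    (hf : IsColoring G k f) (hg : IsColoring G k g) :
    KempeEquiv G f g ↔ xMonomial K G f hf - xMonomial K G g hg ∈ kempeIdeal K G := by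
  constructor
  · intro h
    exact equiv_mem K h hf hg
  · intro hmem
    classical
    have hPhi : Phi G k K (xMonomial K G f hf - xMonomial K G g hg)
        = Finsupp.single (some (kclass G k f)) 1 - Finsupp.single (some (kclass G k g)) 1 := by
      rw [map_sub, xMonomial_eq K hf, xMonomial_eq K hg, Phi_monomial, Phi_monomial,
        mu_eq_some G k hf, mu_eq_some G k hg, one_smul, one_smul]
    have hmemN : Phi G k K (xMonomial K G f hf - xMonomial K G g hg)
        ∈ Submodule.span K {Finsupp.single (none : Option (kquot G k)) (1:K)} := by
      rw [kempeIdeal, Submodule.add_eq_sup] at hmem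
      obtain ⟨a, ha, b, hb, hab⟩ := Submodule.mem_sup.1 hmem
      rw [← hab, map_add]
      have h1 := Phi_J G k K a ha 1
      have h2 := Phi_M G k K b hb 1
      rw [one_mul] at h1 h2
      exact add_mem h1 h2
    rw [hPhi] at hmemN
    obtain ⟨c, hc⟩ := Submodule.mem_span_singleton.1 hmemN
    by_cases hq : kclass G k f = kclass G k g
    · have heqv := Quot.eq.1 hq
      have hequiv : Equivalence (fun f g : Fin d → Fin k => KempeEquiv G f g) :=
        ⟨fun _ => kempeEquiv_refl _, fun h => kempeEquiv_symm h,
          fun h1 h2 => kempeEquiv_trans h1 h2⟩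
      exact (hequiv.eqvGen_iff).1 heqv
    · exfalso
      have happ := DFunLike.congr_fun hc (some (kclass G k f))
      simp only [Finsupp.smul_apply, Finsupp.sub_apply, Finsupp.single_apply] at happ
      rw [if_neg (fun hcon => hq (Option.some.inj hcon).symm)] at happ
      simp at happ
end
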